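/- For positive integers a, b, there is a bijection between positive integer solutions (x1, x2, y1, y2) of x1*y1 = x2^a + 1, x2*y2 = x1^b + 1 and positive integer solutions (x, y, z) of x*y^b*z = (x^a + 1)^b + y^b, given by x = x2, y = y1, z = y2, with x1 = (x2^a + 1)/y1. -/

import Mathlib

theorem stmt17 (a b : ℕ) (ha : 0 < a) (hb : 0 < b) :
    ∃ e : {p : ℕ × ℕ × ℕ × ℕ // 0 < p.1 ∧ 0 < p.2.1 ∧ 0 < p.2.2.1 ∧ 0 < p.2.2.2 ∧
        p.1 * p.2.2.1 = p.2.1 ^ a + 1 ∧ p.2.1 * p.2.2.2 = p.1 ^ b + 1} ≃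
      {q : ℕ × ℕ × ℕ // 0 < q.1 ∧ 0 < q.2.1 ∧ 0 < q.2.2 ∧
        q.1 * q.2.1 ^ b * q.2.2 = (q.1 ^ a + 1) ^ b + q.2.1 ^ b},
      ∀ p, ((e p : ℕ × ℕ × ℕ)) = ((p : ℕ × ℕ × ℕ × ℕ).2.1,
        (p : ℕ × ℕ × ℕ × ℕ).2.2.1, (p : ℕ × ℕ × ℕ × ℕ).2.2.2) := by
  classical
  have hb' : b ≠ 0 := hb.ne'
  set f : {p : ℕ × ℕ × ℕ × ℕ // 0 < p.1 ∧ 0 < p.2.1 ∧ 0 < p.2.2.1 ∧ 0 < p.2.2.2 ∧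
        p.1 * p.2.2.1 = p.2.1 ^ a + 1 ∧ p.2.1 * p.2.2.2 = p.1 ^ b + 1} →
      {q : ℕ × ℕ × ℕ // 0 < q.1 ∧ 0 < q.2.1 ∧ 0 < q.2.2 ∧
        q.1 * q.2.1 ^ b * q.2.2 = (q.1 ^ a + 1) ^ b + q.2.1 ^ b} :=
    fun p => ⟨(p.1.2.1, p.1.2.2.1, p.1.2.2.2), by
      obtain ⟨⟨x1, x2, y1, y2⟩, hx1, hx2, hy1, hy2, h1, h2⟩ := p
      refine ⟨hx2, hy1, hy2, ?_⟩
      simp only at h1 h2 ⊢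
      calc x2 * y1 ^ b * y2 = y1 ^ b * (x2 * y2) := by ring
        _ = y1 ^ b * (x1 ^ b + 1) := by rw [h2]
        _ = (x1 * y1) ^ b + y1 ^ b := by ring
        _ = (x2 ^ a + 1) ^ b + y1 ^ b := by rw [h1]⟩ with hf
  have hinj : Function.Injective f := by
    rintro ⟨⟨x1, x2, y1, y2⟩, hx1, hx2, hy1, hy2, h1, h2⟩
      ⟨⟨x1', x2', y1', y2'⟩, hx1', hx2', hy1', hy2', h1', h2'⟩ h
    simp only [hf, Subtype.mk.injEq, Prod.mk.injEq] at h ⊢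
    obtain ⟨e2, e3, e4⟩ := h
    subst e2; subst e3; subst e4
    refine ⟨?_, rfl, rfl, rfl⟩
    have : x1 * y1 = x1' * y1 := by rw [h1, h1']
    exact Nat.eq_of_mul_eq_mul_right hy1 this
  have hsurj : Function.Surjective f := by
    rintro ⟨⟨x, y, z⟩, hx, hy, hz, heq⟩
    simp only at heq
    have hdvd : y ^ b ∣ (x ^ a + 1) ^ b := by
      have h0 : y ^ b ∣ x * y ^ b * z := ⟨x * z, by ring⟩
      rw [heq] at h0
      exact (Nat.dvd_add_iff_left (dvd_refl _)).mpr h0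
    have hdvd' : y ∣ x ^ a + 1 := (Nat.pow_dvd_pow_iff hb').mp hdvd
    obtain ⟨x1, hx1eq⟩ := hdvd'
    have hx1pos : 0 < x1 := by
      rcases Nat.eq_zero_or_pos x1 with h | h
      · simp [h] at hx1eq
      · exact h
    have hxz : x * z = x1 ^ b + 1 := by
      have h2 : y ^ b * (x * z) = y ^ b * (x1 ^ b + 1) := by
        calc y ^ b * (x * z) = x * y ^ b * z := by ring
          _ = (x ^ a + 1) ^ b + y ^ b := heq
          _ = (y * x1) ^ b + y ^ b := by rw [hx1eq]
          _ = y ^ b * (x1 ^ b + 1) := by ring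
      exact Nat.eq_of_mul_eq_mul_left (pow_pos hy b) h2
    refine ⟨⟨(x1, x, y, z), hx1pos, hx, hy, hz, ?_, ?_⟩, ?_⟩
    · simpa [mul_comm] using hx1eq.symm
    · exact hxz
    · apply Subtype.ext; rfl
  exact ⟨Equiv.ofBijective f ⟨hinj, hsurj⟩, fun p => rfl⟩
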